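/- Let q be a prime and let k, s be integers with k invertible modulo q, k^d ≡ 1 (mod q) and k ≢ 1 (mod q), where d ≥ 1. Then for all integers i ≥ 0, the following congruences hold modulo q: T(k,s,d·i) ≡ d·i / (k(k−1)) if s ≡ 1 (mod q); T(k,s,d·i) ≡ d·i / (k(s−1)) if s·k ≡ 1 (mod q); and T(k,s,d·i) ≡ (s^{d·i} − 1) / (k(s−1)(sk−1)) otherwise. Here T(k,s,j) = ∑_{h=0}^{j−1} S(s,h)·k^{h−1} for j ≥ 1, T(k,s,0) = 0, S(s,h) = ∑_{i=0}^{h−1} s^i, and division denotes multiplication by a modular inverse. -/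

import Mathlib

/-- `S(s,j) = ∑_{i=0}^{j-1} s^i` (so `S(s,0) = 0`), as an integer. -/
def Ssum (s : ℤ) (j : ℕ) : ℤ := ∑ i ∈ Finset.range j, s ^ i

/-- `T(k,s,j) = ∑_{h=0}^{j-1} S(s,h)·k^{h-1}` (so `T(k,s,0) = T(k,s,1) = 0`; the term
`h = 0` vanishes since `S(s,0) = 0`, so truncated subtraction in the exponent is
harmless and `T` is an integer). -/
def Tsum (k s : ℤ) (j : ℕ) : ℤ := ∑ h ∈ Finset.range j, Ssum s h * k ^ (h - 1)

lemma aux_sum_mul {R : Type*} [CommRing R] (x : R) (n : ℕ) :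
    (∑ h ∈ Finset.range n, (h : R) * x ^ h) * (x - 1)
      = n * x ^ n - x ^ n + 1 - ∑ h ∈ Finset.range n, x ^ h := by
  induction n with
  | zero => simp
  | succ n ih =>
    rw [Finset.sum_range_succ, Finset.sum_range_succ, add_mul, ih]
    push_cast
    ring

/-- **Proposition (congruences for `T`), part (ii).** Let `q` be a prime and `k`, `s`
integers with `k` invertible mod `q`, `k^d ≡ 1 (mod q)` and `k ≢ 1 (mod q)`, where
`d ≥ 1`. Then for all `i ≥ 0`, modulo `q`:
`T(k,s,d·i) ≡ d·i/(k(k-1))` if `s ≡ 1`; `T(k,s,d·i) ≡ d·i/(k(s-1))` if `s·k ≡ 1`;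
and `T(k,s,d·i) ≡ (s^{d·i} - 1)/(k(s-1)(sk-1))` otherwise. -/
theorem Tsum_congruence (q : ℕ) (hq : q.Prime) (k s : ℤ) (d : ℕ) (hd : 1 ≤ d)
    (hku : IsUnit (k : ZMod q)) (hkd : (k : ZMod q) ^ d = 1) (hk1 : (k : ZMod q) ≠ 1)
    (i : ℕ) :
    ((Tsum k s (d * i) : ℤ) : ZMod q) =
      if (s : ZMod q) = 1 then
        ((d * i : ℕ) : ZMod q) * ((k : ZMod q) * ((k : ZMod q) - 1))⁻¹
      else if (s : ZMod q) * (k : ZMod q) = 1 then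
        ((d * i : ℕ) : ZMod q) * ((k : ZMod q) * ((s : ZMod q) - 1))⁻¹
      else
        ((s : ZMod q) ^ (d * i) - 1) *
          ((k : ZMod q) * ((s : ZMod q) - 1) * ((s : ZMod q) * (k : ZMod q) - 1))⁻¹ := by
  haveI := Fact.mk hq
  set K : ZMod q := (k : ZMod q) with hK
  set S : ZMod q := (s : ZMod q) with hS
  set n := d * i with hn
  have hK0 : K ≠ 0 := hku.ne_zero
  have hKn : K ^ n = 1 := by rw [hn, pow_mul, hkd, one_pow]
  have hKsub : K - 1 ≠ 0 := sub_ne_zero.mpr hk1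
  have hgeomK : (∑ h ∈ Finset.range n, K ^ h) = 0 := by
    have h1 := geom_sum_mul K n
    rw [hKn, sub_self] at h1
    exact (mul_eq_zero.mp h1).resolve_right hKsub
  have hT : ((Tsum k s n : ℤ) : ZMod q) * K
      = ∑ h ∈ Finset.range n, (∑ j ∈ Finset.range h, S ^ j) * K ^ h := by
    simp only [Tsum, Ssum]
    push_cast
    rw [Finset.sum_mul]
    apply Finset.sum_congr rfl
    intro h _
    cases h with
    | zero => simp
    | succ m => rw [Nat.add_sub_cancel, pow_succ]; ring
  by_cases hs1 : S = 1
  · rw [if_pos hs1]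
    have hU : ((Tsum k s n : ℤ) : ZMod q) * K = ∑ h ∈ Finset.range n, (h : ZMod q) * K ^ h := by
      rw [hT]
      apply Finset.sum_congr rfl
      intro h _
      simp [hs1]
    have hA : ((Tsum k s n : ℤ) : ZMod q) * K * (K - 1) = (n : ZMod q) := by
      rw [hU, aux_sum_mul, hKn, hgeomK]
      ring
    rw [eq_mul_inv_iff_mul_eq₀ (by exact mul_ne_zero hK0 hKsub)]
    rw [← mul_assoc]
    exact hA
  · rw [if_neg hs1]
    have hSsub : S - 1 ≠ 0 := sub_ne_zero.mpr hs1
    have hU : ((Tsum k s n : ℤ) : ZMod q) * K * (S - 1)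
        = ∑ h ∈ Finset.range n, (S * K) ^ h := by
      rw [hT, Finset.sum_mul]
      have : ∀ h ∈ Finset.range n,
          (∑ j ∈ Finset.range h, S ^ j) * K ^ h * (S - 1) = (S * K) ^ h - K ^ h := by
        intro h _
        rw [mul_pow]
        linear_combination (K ^ h) * geom_sum_mul S h
      rw [Finset.sum_congr rfl this, Finset.sum_sub_distrib, hgeomK, sub_zero]
    by_cases hsk : S * K = 1
    · rw [if_pos hsk]
      have hU' : ((Tsum k s n : ℤ) : ZMod q) * K * (S - 1) = (n : ZMod q) := by
        rw [hU]; simp [hsk]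
      rw [eq_mul_inv_iff_mul_eq₀ (mul_ne_zero hK0 hSsub)]
      rw [← mul_assoc]
      exact hU'
    · rw [if_neg hsk]
      have hsksub : S * K - 1 ≠ 0 := sub_ne_zero.mpr hsk
      have hU' : ((Tsum k s n : ℤ) : ZMod q) * K * (S - 1) * (S * K - 1) = S ^ n - 1 := by
        rw [hU, geom_sum_mul, mul_pow, hKn, mul_one]
      rw [eq_mul_inv_iff_mul_eq₀ (mul_ne_zero (mul_ne_zero hK0 hSsub) hsksub)]
      calc ((Tsum k s n : ℤ) : ZMod q) * (K * (S - 1) * (S * K - 1))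
          = ((Tsum k s n : ℤ) : ZMod q) * K * (S - 1) * (S * K - 1) := by ring
        _ = S ^ n - 1 := hU'
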